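/- arXiv:2111.15349 — 4 statements merged into one kernel-verified Lean document; each statement's English description precedes it below -/
import Mathlib

section
/- Let G be a locally compact group with Haar measure vol. Then the following three conditions are equivalent: (a) m(G) < ∞; (b) G has an open compact subgroup; (c) the identity component G₀ of G is compact. Moreover, if these equivalent conditions hold, then m(G) = vol(G₀). -/
open MeasureTheory ENNReal

section Aux

open Set Pointwise

/-- From a compact open neighbourhood of `1` one can extract a compact open subgroup. -/
lemma aux_vanDantzig {G : Type*} [Group G] [TopologicalSpace G] [IsTopologicalGroup G]
    {V : Set G} (hVc : IsCompact V) (hVo : IsOpen V) (h1V : (1 : G) ∈ V) :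
    ∃ H : Subgroup G, IsOpen (H : Set G) ∧ IsCompact (H : Set G) := by
  obtain ⟨W, hW1, hWV⟩ := compact_open_separated_mul_left hVc hVo subset_rfl
  obtain ⟨W', hW'W, hW'o, h1W'⟩ := mem_nhds_iff.1 hW1
  set U : Set G := W' ∩ W'⁻¹ with hU
  have hUo : IsOpen U := hW'o.inter hW'o.inv
  have h1U : (1 : G) ∈ U := ⟨h1W', by simpa using h1W'⟩
  have hUsymm : ∀ x ∈ U, x⁻¹ ∈ U := fun x hx => ⟨hx.2, by simpa using hx.1⟩
  have key : ∀ y ∈ U, y • V ⊆ V := by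
    intro y hy z hz
    obtain ⟨v, hv, rfl⟩ := hz
    exact hWV (Set.mul_mem_mul (hW'W hy.1) hv)
  have hsmul : ∀ x ∈ U, x • V = V := by
    intro x hx
    apply subset_antisymm (key x hx)
    intro v hv
    rw [Set.mem_smul_set_iff_inv_smul_mem]
    exact key _ (hUsymm x hx) (Set.smul_mem_smul_set hv)
  have hle : Subgroup.closure U ≤ MulAction.stabilizer G V :=
    (Subgroup.closure_le _).2 fun x hx => MulAction.mem_stabilizer_iff.2 (hsmul x hx)
  have hsub : (Subgroup.closure U : Set G) ⊆ V := by
    intro x hx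
    have hxV : x • V = V := MulAction.mem_stabilizer_iff.1 (hle hx)
    have : x • (1 : G) ∈ x • V := Set.smul_mem_smul_set h1V
    rw [hxV] at this
    simpa using this
  have hopen : IsOpen (Subgroup.closure U : Set G) :=
    Subgroup.isOpen_of_mem_nhds _
      (Filter.mem_of_superset (hUo.mem_nhds h1U) Subgroup.subset_closure)
  exact ⟨Subgroup.closure U, hopen,
    hVc.of_isClosed_subset ((Subgroup.closure U).isClosed_of_isOpen hopen) hsub⟩

/-- The preimage of a preconnected set under the separation quotient map is preconnected. -/
lemma aux_preimage_preconnected {X : Type*} [TopologicalSpace X]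
    {S : Set (SeparationQuotient X)} (hS : IsPreconnected S) :
    IsPreconnected (SeparationQuotient.mk ⁻¹' S) := by
  intro u v hu hv huv hne1 hne2
  obtain ⟨u', hu', rfl⟩ := SeparationQuotient.isInducing_mk.isOpen_iff.1 hu
  obtain ⟨v', hv', rfl⟩ := SeparationQuotient.isInducing_mk.isOpen_iff.1 hv
  have hSuv : S ⊆ u' ∪ v' := by
    intro s hs
    obtain ⟨x, rfl⟩ := SeparationQuotient.surjective_mk s
    exact huv hs
  obtain ⟨x, hx⟩ := hne1
  obtain ⟨y, hy⟩ := hne2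
  obtain ⟨s, hs⟩ := hS u' v' hu' hv' hSuv ⟨_, hx.1, hx.2⟩ ⟨_, hy.1, hy.2⟩
  obtain ⟨z, rfl⟩ := SeparationQuotient.surjective_mk s
  exact ⟨z, hs.1, hs.2.1, hs.2.2⟩

/-- In a compact `R1` space, any open set containing a connected component contains a
clopen set containing the base point. -/
lemma aux_clopen_between {X : Type*} [TopologicalSpace X] [CompactSpace X] [R1Space X]
    {x : X} {U : Set X} (hU : IsOpen U) (hcU : connectedComponent x ⊆ U) :
    ∃ V : Set X, IsClopen V ∧ x ∈ V ∧ V ⊆ U := by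
  haveI : CompactSpace (SeparationQuotient X) :=
    ⟨by rw [← SeparationQuotient.range_mk]
        exact isCompact_range SeparationQuotient.continuous_mk⟩
  set m : X → SeparationQuotient X := SeparationQuotient.mk with hm
  have hpre : m ⁻¹' (connectedComponent (m x)) ⊆ U := by
    have h1 : IsPreconnected (m ⁻¹' connectedComponent (m x)) :=
      aux_preimage_preconnected isPreconnected_connectedComponent
    have h2 : m ⁻¹' connectedComponent (m x) ⊆ connectedComponent x :=
      h1.subset_connectedComponent (Set.mem_preimage.2 mem_connectedComponent)
    exact h2.trans hcU
  set U' : Set (SeparationQuotient X) := (m '' Uᶜ)ᶜ with hU'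
  have hU'o : IsOpen U' :=
    (SeparationQuotient.isClosedMap_mk _ hU.isClosed_compl).isOpen_compl
  have hCU' : connectedComponent (m x) ⊆ U' := by
    intro q hq hq'
    obtain ⟨y, hy, rfl⟩ := hq'
    exact hy (hpre hq)
  have hpre' : m ⁻¹' U' ⊆ U := by
    intro y hy
    by_contra h
    exact hy (Set.mem_image_of_mem m h)
  haveI : Nonempty {s : Set (SeparationQuotient X) // IsClopen s ∧ m x ∈ s} :=
    ⟨⟨Set.univ, isClopen_univ, Set.mem_univ _⟩⟩
  obtain ⟨Z, hZ⟩ := exists_subset_nhds_of_compactSpace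
    (V := fun Z : {s : Set (SeparationQuotient X) // IsClopen s ∧ m x ∈ s} => Z.1)
    (fun a b => ⟨⟨a.1 ∩ b.1, a.2.1.inter b.2.1, a.2.2, b.2.2⟩,
      Set.inter_subset_left, Set.inter_subset_right⟩)
    (fun Z => Z.2.1.isClosed)
    (fun y hy => hU'o.mem_nhds (hCU'
      (by rw [connectedComponent_eq_iInter_isClopen]; exact hy)))
  exact ⟨m ⁻¹' Z, Z.2.1.preimage SeparationQuotient.continuous_mk, Z.2.2,
    (Set.preimage_mono hZ).trans hpre'⟩

variable {G : Type*} [Group G] [TopologicalSpace G] [IsTopologicalGroup G]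
    [MeasurableSpace G] [BorelSpace G]

/-- The comap of a Haar measure to an open subgroup is a Haar measure. -/
lemma aux_comap_isHaar (μ : Measure G) [μ.IsHaarMeasure] {H : Subgroup G}
    (hO : IsOpen (H : Set G)) :
    (μ.comap (Subtype.val : H → G)).IsHaarMeasure := by
  haveI : BorelSpace H := Subtype.borelSpace (H : Set G)
  have emb : Topology.IsOpenEmbedding (Subtype.val : H → G) := hO.isOpenEmbedding_subtypeVal
  have me : MeasurableEmbedding (Subtype.val : H → G) := emb.measurableEmbedding
  set ν := μ.comap (Subtype.val : H → G) with hν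
  have hνs : ∀ s : Set H, ν s = μ (Subtype.val '' s) := fun s => me.comap_apply μ s
  haveI inv : ν.IsMulLeftInvariant := by
    constructor
    intro h
    ext s hs
    rw [Measure.map_apply (measurable_const_mul h) hs, hνs, hνs]
    have himg : Subtype.val '' ((fun x => h * x) ⁻¹' s)
        = (fun x => (h : G) * x) ⁻¹' (Subtype.val '' s) := by
      ext z
      constructor
      · rintro ⟨y, hy, rfl⟩
        exact ⟨h * y, hy, by simp⟩
      · rintro ⟨y, hy, hyz⟩
        refine ⟨h⁻¹ * y, by simpa using hy, ?_⟩
        have : (y : G) = (h : G) * z := hyz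
        simp [this]
    rw [himg, measure_preimage_mul]
  haveI pos : ν.IsOpenPosMeasure := by
    constructor
    intro W hW hWne
    rw [hνs]
    exact ((emb.isOpenMap W hW).measure_pos μ (hWne.image _)).ne'
  haveI fin : IsFiniteMeasureOnCompacts ν := by
    constructor
    intro K hK
    rw [hνs]
    exact (hK.image continuous_subtype_val).measure_lt_top
  exact ⟨⟩

/-- An open subgroup with finite Haar measure is compact. -/
lemma aux_compact_of_finite [LocallyCompactSpace G]
    (μ : Measure G) [μ.IsHaarMeasure] {H : Subgroup G} (hO : IsOpen (H : Set G))
    (hfin : μ (H : Set G) < ⊤) : IsCompact (H : Set G) := by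
  haveI : BorelSpace H := Subtype.borelSpace (H : Set G)
  have emb : Topology.IsOpenEmbedding (Subtype.val : H → G) := hO.isOpenEmbedding_subtypeVal
  have me : MeasurableEmbedding (Subtype.val : H → G) := emb.measurableEmbedding
  haveI : LocallyCompactSpace H := emb.locallyCompactSpace
  haveI := aux_comap_isHaar μ hO
  set ν := μ.comap (Subtype.val : H → G) with hν
  have hνs : ∀ s : Set H, ν s = μ (Subtype.val '' s) := fun s => me.comap_apply μ s
  by_contra hc
  have hcs : ¬ CompactSpace H := by
    intro h
    exact hc (by rw [isCompact_iff_compactSpace]; exact h)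
  haveI : NoncompactSpace H := not_compactSpace_iff.1 hcs
  have htop := measure_univ_of_isMulLeftInvariant ν
  rw [hνs, Set.image_univ, Subtype.range_coe_subtype] at htop
  have : μ (H : Set G) = ⊤ := htop
  exact absurd this (by simpa using hfin.ne)

/-- The image of the connected component of `1` in a subgroup is contained in the
connected component of `1` in the group. -/
lemma aux_image_component {K : Set G} (h1 : (1 : G) ∈ K) :
    Subtype.val '' connectedComponent (⟨1, h1⟩ : K) ⊆ connectedComponent (1 : G) :=
  (isPreconnected_connectedComponent.image _
    continuous_subtype_val.continuousOn).subset_connectedComponent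
    ⟨⟨1, h1⟩, mem_connectedComponent, rfl⟩

end Aux

/-- **Remark 2.4 (3).** For a locally compact group `G` with left Haar measure `μ`,
the following are equivalent: (a) `m(G) < ∞`; (b) `G` has a compact open subgroup;
(c) the identity component `G₀` is compact. Moreover, under these equivalent conditions,
`m(G) = vol(G₀)`. -/
theorem mG_finite_iff
    {G : Type*} [Group G] [TopologicalSpace G] [IsTopologicalGroup G]
    [LocallyCompactSpace G] [MeasurableSpace G] [BorelSpace G]
    (μ : Measure G) [μ.IsHaarMeasure]
    (mG : ℝ≥0∞)
    (hmG : mG = ⨅ (H : Subgroup G) (_ : IsOpen (H : Set G)), μ (H : Set G)) :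
    (mG < ⊤ ↔ ∃ H : Subgroup G, IsOpen (H : Set G) ∧ IsCompact (H : Set G)) ∧
    (mG < ⊤ ↔ IsCompact (connectedComponent (1 : G))) ∧
    (mG < ⊤ → mG = μ (connectedComponent (1 : G))) := by
  subst hmG
  -- (b) → (a)
  have h_ba : ∀ H : Subgroup G, IsOpen (H : Set G) → IsCompact (H : Set G) →
      (⨅ (H : Subgroup G) (_ : IsOpen (H : Set G)), μ (H : Set G)) < ⊤ := fun H hO hC =>
    lt_of_le_of_lt (iInf₂_le H hO) hC.measure_lt_top
  -- (a) → (b)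
  have h_ab : (⨅ (H : Subgroup G) (_ : IsOpen (H : Set G)), μ (H : Set G)) < ⊤ →
      ∃ H : Subgroup G, IsOpen (H : Set G) ∧ IsCompact (H : Set G) := by
    intro h
    rw [iInf_lt_iff] at h
    obtain ⟨H, hH⟩ := h
    rw [iInf_lt_iff] at hH
    obtain ⟨hO, hfin⟩ := hH
    exact ⟨H, hO, aux_compact_of_finite μ hO hfin⟩
  -- (b) → (c)
  have h_bc : (∃ H : Subgroup G, IsOpen (H : Set G) ∧ IsCompact (H : Set G)) →
      IsCompact (connectedComponent (1 : G)) := by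
    rintro ⟨H, hO, hC⟩
    exact hC.of_isClosed_subset isClosed_connectedComponent
      (IsClopen.connectedComponent_subset ⟨H.isClosed_of_isOpen hO, hO⟩ H.one_mem)
  -- (c) → (b)
  have h_cb : IsCompact (connectedComponent (1 : G)) →
      ∃ H : Subgroup G, IsOpen (H : Set G) ∧ IsCompact (H : Set G) := by
    intro hG0
    obtain ⟨K, hKc, hKint, -⟩ := exists_compact_between hG0 isOpen_univ (Set.subset_univ _)
    have h1K : (1 : G) ∈ K := interior_subset (hKint mem_connectedComponent)
    haveI : CompactSpace K := isCompact_iff_compactSpace.1 hKc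
    set x0 : K := ⟨1, h1K⟩ with hx0
    have hx0U : connectedComponent x0 ⊆ (Subtype.val ⁻¹' interior K : Set K) := by
      intro y hy
      exact hKint (aux_image_component h1K ⟨y, hy, rfl⟩)
    obtain ⟨V, hVclopen, hx0V, hVsub⟩ :=
      aux_clopen_between (isOpen_interior.preimage continuous_subtype_val) hx0U
    obtain ⟨O, hOopen, hOV⟩ := isOpen_induced_iff.1 hVclopen.2
    have himg : Subtype.val '' V = K ∩ O := by
      rw [← hOV]; exact Subtype.image_preimage_coe K O
    have hVint : Subtype.val '' V ⊆ interior K := by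
      rintro z ⟨y, hy, rfl⟩
      exact hVsub hy
    have hopen' : IsOpen (Subtype.val '' V) := by
      have heq : Subtype.val '' V = interior K ∩ O := by
        apply subset_antisymm
        · intro z hz
          exact ⟨hVint hz, (himg ▸ hz).2⟩
        · intro z hz
          rw [himg]
          exact ⟨interior_subset hz.1, hz.2⟩
      rw [heq]
      exact isOpen_interior.inter hOopen
    have hcpt' : IsCompact (Subtype.val '' V) :=
      (hVclopen.1.isCompact).image continuous_subtype_val
    have h1V' : (1 : G) ∈ Subtype.val '' V := ⟨x0, hx0V, rfl⟩
    exact aux_vanDantzig hcpt' hopen' h1V'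
  refine ⟨⟨h_ab, fun ⟨H, hO, hC⟩ => h_ba H hO hC⟩,
    ⟨fun h => h_bc (h_ab h), fun h => (fun ⟨H, hO, hC⟩ => h_ba H hO hC) (h_cb h)⟩, ?_⟩
  -- the equality `mG = μ G₀`
  intro h
  obtain ⟨K, hKo, hKc⟩ := h_ab h
  haveI : BorelSpace K := Subtype.borelSpace (K : Set G)
  have emb : Topology.IsOpenEmbedding (Subtype.val : K → G) := hKo.isOpenEmbedding_subtypeVal
  have me : MeasurableEmbedding (Subtype.val : K → G) := emb.measurableEmbedding
  haveI : CompactSpace K := isCompact_iff_compactSpace.1 hKc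
  haveI := aux_comap_isHaar μ hKo
  set ν := μ.comap (Subtype.val : K → G) with hν
  have hνs : ∀ s : Set K, ν s = μ (Subtype.val '' s) := fun s => me.comap_apply μ s
  have hG0K : connectedComponent (1 : G) ⊆ (K : Set G) :=
    IsClopen.connectedComponent_subset ⟨K.isClosed_of_isOpen hKo, hKo⟩ K.one_mem
  apply le_antisymm
  · -- mG ≤ μ G₀
    refine le_of_forall_gt_imp_ge_of_dense fun r hr => ?_
    set S : Set K := Subtype.val ⁻¹' (connectedComponent (1 : G)) with hS
    have hSν : ν S < r := by
      rw [hνs]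
      have hrange : Set.range (Subtype.val : K → G) = (K : Set G) := by
        ext x; simp [Subtype.range_coe_subtype]
      have : Subtype.val '' S = connectedComponent (1 : G) := by
        rw [hS, Set.image_preimage_eq_inter_range, hrange]
        exact Set.inter_eq_left.2 hG0K
      rwa [this]
    obtain ⟨U, hSU, hUo, hUr⟩ := S.exists_isOpen_lt_of_lt _ hSν
    have hcomp : connectedComponent ((1 : K)) ⊆ U := by
      refine Set.Subset.trans ?_ hSU
      intro y hy
      exact aux_image_component K.one_mem ⟨y, hy, rfl⟩
    obtain ⟨V, hVclopen, hx0V, hVU⟩ := aux_clopen_between hUo hcomp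
    obtain ⟨H', hH'V⟩ :=
      IsTopologicalGroup.exist_openSubgroup_sub_clopen_nhds_of_one hVclopen hx0V
    set H : Subgroup G := H'.toSubgroup.map K.subtype with hH
    have hHset : (H : Set G) = Subtype.val '' (H'.toSubgroup : Set K) := by
      rw [hH, Subgroup.coe_map]
      rfl
    have hHopen : IsOpen (H : Set G) := by
      rw [hHset]
      exact emb.isOpenMap _ H'.isOpen
    calc (⨅ (H : Subgroup G) (_ : IsOpen (H : Set G)), μ (H : Set G))
        ≤ μ (H : Set G) := iInf₂_le H hHopen
      _ = ν (H'.toSubgroup : Set K) := by rw [hHset, ← hνs]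
      _ ≤ ν U := measure_mono (Set.Subset.trans hH'V hVU)
      _ ≤ r := hUr.le
  · -- μ G₀ ≤ mG
    refine le_iInf fun H => le_iInf fun hO => measure_mono ?_
    exact IsClopen.connectedComponent_subset ⟨H.isClosed_of_isOpen hO, hO⟩ H.one_mem
end

section
/- Let G be a connected unimodular locally compact group with Haar measure dg, and let φ1, φ2 : G → [0,1] be integrable functions with ‖φ1‖ + ‖φ2‖ − vol(G) ≥ 0. Then for every real t with 0 ≤ t ≤ ‖φ1‖ + ‖φ2‖ − vol(G) one has ∫_G max(φ1*φ2(g) − t, 0) dg = ‖φ1‖·‖φ2‖ − t·vol(G). -/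
open MeasureTheory Filter
open scoped ENNReal NNReal

theorem my_approx_aux {G : Type*} [Group G] [TopologicalSpace G] [IsTopologicalGroup G]
    [LocallyCompactSpace G] [MeasurableSpace G] [BorelSpace G] [CompactSpace G]
    (μ : Measure G) [μ.IsHaarMeasure] [μ.IsMulRightInvariant] [IsFiniteMeasure μ]
    (φ : G → ℝ) (hφ : ∀ g, φ g ∈ Set.Icc (0:ℝ) 1) (hi : Integrable φ μ)
    (ε : ℝ) (hε : 0 < ε) :
    ∃ f : G → ℝ, Continuous f ∧ (∀ x, f x ∈ Set.Icc (0:ℝ) 1) ∧ (∫ x, ‖φ x - f x‖ ∂μ) ≤ ε := by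
  obtain ⟨g, -, hg, gcont, gint⟩ := hi.exists_hasCompactSupport_integral_sub_le hε
  set f : G → ℝ := fun x => max 0 (min 1 (g x)) with hf
  have fcont : Continuous f := continuous_const.max (continuous_const.min gcont)
  have fmem : ∀ x, f x ∈ Set.Icc (0:ℝ) 1 := by
    intro x
    refine ⟨le_max_left _ _, ?_⟩
    simp only [hf, max_le_iff]
    exact ⟨zero_le_one, min_le_left _ _⟩
  refine ⟨f, fcont, fmem, le_trans ?_ hg⟩
  have fint : Integrable f μ := fcont.integrable_of_hasCompactSupport
    (HasCompactSupport.of_compactSpace f)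
  apply integral_mono ((hi.sub fint).norm) ((hi.sub gint).norm)
  intro x
  simp only [Pi.sub_apply, Real.norm_eq_abs]
  obtain ⟨ha, hb⟩ := hφ x
  rcases le_total (g x) 0 with h | h
  · have hfx : f x = 0 := by
      simp only [hf]
      rw [min_eq_right (h.trans zero_le_one), max_eq_left h]
    rw [hfx, sub_zero, abs_of_nonneg ha, abs_of_nonneg (by linarith)]
    linarith
  · rcases le_total 1 (g x) with h2 | h2
    · have hfx : f x = 1 := by
        simp only [hf]
        rw [min_eq_left h2, max_eq_right zero_le_one]
      rw [hfx, abs_of_nonpos (by linarith), abs_of_nonpos (by linarith)]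
      linarith
    · have hfx : f x = g x := by
        simp only [hf]
        rw [min_eq_right h2, max_eq_right h]
      rw [hfx]

theorem my_cont_conv_aux {G : Type*} [Group G] [TopologicalSpace G] [IsTopologicalGroup G]
    [LocallyCompactSpace G] [MeasurableSpace G] [BorelSpace G] [CompactSpace G]
    (μ : Measure G) [μ.IsHaarMeasure] [μ.IsMulRightInvariant] [IsFiniteMeasure μ]
    (f1 f2 : G → ℝ) (h1 : Continuous f1) (h2 : Continuous f2)
    (m1 : ∀ x, f1 x ∈ Set.Icc (0:ℝ) 1) :
    Continuous (fun g => ∫ g', f1 g' * f2 (g'⁻¹ * g) ∂μ) := by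
  set V : ℝ := (μ Set.univ).toReal with hV
  have hV0 : 0 ≤ V := ENNReal.toReal_nonneg
  set T : C(G, ℝ) → ℝ := fun h => ∫ x, f1 x * h x ∂μ with hT
  have hTlip : LipschitzWith V.toNNReal T := by
    apply LipschitzWith.of_dist_le_mul
    intro h h'
    have ih : Integrable (fun x => f1 x * h x) μ :=
      (h1.mul h.continuous).integrable_of_hasCompactSupport (HasCompactSupport.of_compactSpace _)
    have ih' : Integrable (fun x => f1 x * h' x) μ :=
      (h1.mul h'.continuous).integrable_of_hasCompactSupport (HasCompactSupport.of_compactSpace _)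
    rw [Real.dist_eq, hT]
    have : (∫ x, f1 x * h x ∂μ) - ∫ x, f1 x * h' x ∂μ = ∫ x, f1 x * h x - f1 x * h' x ∂μ :=
      (integral_sub ih ih').symm
    rw [this]
    calc |∫ x, f1 x * h x - f1 x * h' x ∂μ| ≤ ∫ x, ‖f1 x * h x - f1 x * h' x‖ ∂μ := by
          simpa [Real.norm_eq_abs] using
            norm_integral_le_integral_norm (f := fun x => f1 x * h x - f1 x * h' x) (μ := μ)
      _ ≤ ∫ _x, dist h h' ∂μ := by
          apply integral_mono (ih.sub ih').norm (integrable_const _)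
          intro x
          have hb := m1 x
          calc ‖f1 x * h x - f1 x * h' x‖ = |f1 x| * |h x - h' x| := by
                rw [← mul_sub, Real.norm_eq_abs, abs_mul]
            _ ≤ 1 * dist (h x) (h' x) := by
                apply mul_le_mul (abs_le.2 ⟨by linarith [hb.1], hb.2⟩)
                  (le_of_eq (Real.dist_eq _ _).symm) (abs_nonneg _) zero_le_one
            _ ≤ 1 * dist h h' := by
                have := ContinuousMap.dist_apply_le_dist (f := h) (g := h') x
                linarith
            _ = dist h h' := one_mul _
      _ = V.toNNReal * dist h h' := by
          rw [integral_const, smul_eq_mul, measureReal_def, Real.coe_toNNReal _ hV0]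
  have Fc : Continuous (fun p : G × G => f2 (p.2⁻¹ * p.1)) := by fun_prop
  set F : C(G × G, ℝ) := ⟨fun p => f2 (p.2⁻¹ * p.1), Fc⟩ with hF
  have : (fun g => ∫ g', f1 g' * f2 (g'⁻¹ * g) ∂μ) = fun g => T ((ContinuousMap.curry F) g) := rfl
  rw [this]
  exact hTlip.continuous.comp (ContinuousMap.curry F).continuous

theorem my_swap_aux {G : Type*} [Group G] [TopologicalSpace G] [IsTopologicalGroup G]
    [LocallyCompactSpace G] [MeasurableSpace G] [BorelSpace G] [CompactSpace G]
    (μ : Measure G) [μ.IsHaarMeasure] [μ.IsMulRightInvariant] [IsFiniteMeasure μ]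
    (f1 f2 : G → ℝ) (h1 : Continuous f1) (h2 : Continuous f2) :
    (∫ g, (∫ g', f1 g' * f2 (g'⁻¹ * g) ∂μ) ∂μ) = (∫ x, f1 x ∂μ) * ∫ x, f2 x ∂μ := by
  have Fc : Continuous (Function.uncurry fun g g' => f1 g' * f2 (g'⁻¹ * g)) := by
    apply Continuous.mul
    · exact h1.comp continuous_snd
    · exact h2.comp ((continuous_snd.inv).mul continuous_fst)
  rw [integral_integral_swap_of_hasCompactSupport Fc (HasCompactSupport.of_compactSpace _)]
  have : ∀ g' : G, (∫ g, f1 g' * f2 (g'⁻¹ * g) ∂μ) = f1 g' * ∫ x, f2 x ∂μ := by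
    intro g'
    rw [integral_const_mul]
    congr 1
    exact integral_mul_left_eq_self f2 g'⁻¹
  simp_rw [this]
  exact integral_mul_const _ _

/-- **Lemma 3.1 (2).** Let `G` be a connected unimodular locally compact group and
`φ1 φ2 : G → [0,1]` integrable with `vol G ≤ ‖φ1‖ + ‖φ2‖` (in particular `vol G < ∞`).
Then for every `0 ≤ t ≤ ‖φ1‖ + ‖φ2‖ - vol G`,
`∫ max (φ1 * φ2 - t) 0 = ‖φ1‖ ‖φ2‖ - t vol G`. -/
theorem ft_convolution_of_small_volume
    {G : Type*} [Group G] [TopologicalSpace G] [IsTopologicalGroup G]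
    [LocallyCompactSpace G] [MeasurableSpace G] [BorelSpace G]
    [ConnectedSpace G]
    (μ : Measure G) [μ.IsHaarMeasure] [μ.IsMulRightInvariant]
    (φ1 φ2 : G → ℝ)
    (hφ1 : ∀ g, φ1 g ∈ Set.Icc (0 : ℝ) 1) (hφ2 : ∀ g, φ2 g ∈ Set.Icc (0 : ℝ) 1)
    (hi1 : Integrable φ1 μ) (hi2 : Integrable φ2 μ)
    (hvol : μ Set.univ ≤ ENNReal.ofReal ((∫ g, φ1 g ∂μ) + ∫ g, φ2 g ∂μ))
    (t : ℝ) (ht0 : 0 ≤ t)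
    (ht : t ≤ (∫ g, φ1 g ∂μ) + (∫ g, φ2 g ∂μ) - (μ Set.univ).toReal) :
    (∫ g, max ((∫ g', φ1 g' * φ2 (g'⁻¹ * g) ∂μ) - t) 0 ∂μ) =
      (∫ g, φ1 g ∂μ) * (∫ g, φ2 g ∂μ) - t * (μ Set.univ).toReal := by
  haveI : IsFiniteMeasure μ := ⟨lt_of_le_of_lt hvol ENNReal.ofReal_lt_top⟩
  haveI : CompactSpace G := by
    by_contra H
    rw [not_compactSpace_iff] at H
    exact (measure_ne_top μ Set.univ) (measure_univ_of_isMulLeftInvariant μ)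
  haveI : μ.IsInvInvariant := by
    have h := Measure.isMulInvariant_eq_smul_of_compactSpace μ.inv μ
    have huniv : μ.inv Set.univ = μ Set.univ := by
      rw [Measure.inv_apply]; simp
    have hμ0 : μ Set.univ ≠ 0 := by
      simpa using (isOpen_univ.measure_pos μ ⟨1, trivial⟩).ne'
    have this1 : (μ.inv.haarScalarFactor μ : ℝ≥0∞) * μ Set.univ = 1 * μ Set.univ := by
      have h2 := huniv
      rw [h] at h2
      simpa only [Measure.smul_apply, ENNReal.smul_def, smul_eq_mul, one_mul] using h2
    have hc : (μ.inv.haarScalarFactor μ : ℝ≥0∞) = 1 :=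
      (ENNReal.mul_left_inj hμ0 (measure_ne_top μ _)).mp this1
    have hc' : μ.inv.haarScalarFactor μ = 1 := by exact_mod_cast hc
    constructor
    rw [h, hc', one_smul]
  -- notation
  set V : ℝ := (μ Set.univ).toReal with hVdef
  set I1 : ℝ := ∫ g, φ1 g ∂μ with hI1
  set I2 : ℝ := ∫ g, φ2 g ∂μ with hI2
  -- slice facts
  have slice_int : ∀ (ψ : G → ℝ), Integrable ψ μ → ∀ g : G,
      Integrable (fun x => ψ (x⁻¹ * g)) μ := fun ψ hψ g => (hψ.comp_mul_right g).comp_inv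
  have slice_eq : ∀ (ψ : G → ℝ), Integrable ψ μ → ∀ g : G,
      (∫ x, ψ (x⁻¹ * g) ∂μ) = ∫ x, ψ x ∂μ := by
    intro ψ hψ g
    calc ∫ x, ψ (x⁻¹ * g) ∂μ = ∫ x, ψ (x * g) ∂μ := integral_inv_eq_self (fun x => ψ (x * g)) μ
      _ = ∫ x, ψ x ∂μ := integral_mul_right_eq_self _ g
  set cv : G → ℝ := fun g => ∫ g', φ1 g' * φ2 (g'⁻¹ * g) ∂μ with hcv
  -- integrability of the slice products
  have prodint : ∀ g : G, Integrable (fun g' => φ1 g' * φ2 (g'⁻¹ * g)) μ := by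
    intro g
    apply Integrable.mono' hi1
      (hi1.aestronglyMeasurable.mul (slice_int φ2 hi2 g).aestronglyMeasurable)
    filter_upwards with x
    have a := hφ1 x; have b := hφ2 (x⁻¹ * g)
    simp only [Pi.mul_apply]
    rw [Real.norm_eq_abs, abs_of_nonneg (mul_nonneg a.1 b.1)]
    nlinarith [a.1, a.2, b.1, b.2]
  -- pointwise lower bound
  have lower : ∀ g : G, t ≤ cv g := by
    intro g
    have int1 : Integrable (fun g' => φ1 g' + φ2 (g'⁻¹ * g)) μ := hi1.add (slice_int φ2 hi2 g)
    have e1 : (∫ g', (φ1 g' + φ2 (g'⁻¹ * g) - 1) ∂μ) = I1 + I2 - V := by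
      rw [integral_sub int1 (integrable_const 1), integral_add hi1 (slice_int φ2 hi2 g),
        slice_eq φ2 hi2 g, integral_const]
      simp [hVdef, hI1, hI2, measureReal_def, smul_eq_mul]
    have mono : (∫ g', (φ1 g' + φ2 (g'⁻¹ * g) - 1) ∂μ) ≤ cv g := by
      apply integral_mono (int1.sub (integrable_const 1)) (prodint g)
      intro x
      have a := hφ1 x; have b := hφ2 (x⁻¹ * g)
      simp only [Pi.sub_apply]
      nlinarith [a.1, a.2, b.1, b.2]
    calc t ≤ I1 + I2 - V := ht
      _ = ∫ g', (φ1 g' + φ2 (g'⁻¹ * g) - 1) ∂μ := e1.symm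
      _ ≤ cv g := mono
  -- approximations
  have hε : ∀ n : ℕ, (0:ℝ) < 1 / (n + 1) := by
    intro n; positivity
  choose u1 hu1c hu1m hu1 using fun n : ℕ => my_approx_aux μ φ1 hφ1 hi1 (1/(n+1)) (hε n)
  choose u2 hu2c hu2m hu2 using fun n : ℕ => my_approx_aux μ φ2 hφ2 hi2 (1/(n+1)) (hε n)
  have u1int : ∀ n, Integrable (u1 n) μ := fun n =>
    (hu1c n).integrable_of_hasCompactSupport (HasCompactSupport.of_compactSpace _)
  have u2int : ∀ n, Integrable (u2 n) μ := fun n =>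
    (hu2c n).integrable_of_hasCompactSupport (HasCompactSupport.of_compactSpace _)
  set cvn : ℕ → G → ℝ := fun n g => ∫ g', u1 n g' * u2 n (g'⁻¹ * g) ∂μ with hcvn
  have cvn_cont : ∀ n, Continuous (cvn n) := fun n =>
    my_cont_conv_aux μ (u1 n) (u2 n) (hu1c n) (hu2c n) (hu1m n)
  have cvn_prodint : ∀ n (g : G), Integrable (fun g' => u1 n g' * u2 n (g'⁻¹ * g)) μ := by
    intro n g
    apply Continuous.integrable_of_hasCompactSupport _ (HasCompactSupport.of_compactSpace _)
    exact (hu1c n).mul ((hu2c n).comp (continuous_inv.mul continuous_const))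
  -- uniform estimate
  have est : ∀ n (g : G), |cvn n g - cv g| ≤ 1/(n+1) + 1/(n+1) := by
    intro n g
    have hdiff : cvn n g - cv g = ∫ g', (u1 n g' * u2 n (g'⁻¹ * g) - φ1 g' * φ2 (g'⁻¹ * g)) ∂μ :=
      (integral_sub (cvn_prodint n g) (prodint g)).symm
    have habs : |cvn n g - cv g| ≤
        ∫ g', ‖u1 n g' * u2 n (g'⁻¹ * g) - φ1 g' * φ2 (g'⁻¹ * g)‖ ∂μ := by
      rw [hdiff]
      simpa [Real.norm_eq_abs] using norm_integral_le_integral_norm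
        (f := fun g' => u1 n g' * u2 n (g'⁻¹ * g) - φ1 g' * φ2 (g'⁻¹ * g)) (μ := μ)
    have hint2 : Integrable (fun x => ‖φ2 x - u2 n x‖) μ := (hi2.sub (u2int n)).norm
    have hint1 : Integrable (fun x => ‖φ1 x - u1 n x‖) μ := (hi1.sub (u1int n)).norm
    have hintd : Integrable (fun g' => ‖u1 n g' * u2 n (g'⁻¹ * g) - φ1 g' * φ2 (g'⁻¹ * g)‖) μ :=
      ((cvn_prodint n g).sub (prodint g)).norm
    have hbound : (∫ g', ‖u1 n g' * u2 n (g'⁻¹ * g) - φ1 g' * φ2 (g'⁻¹ * g)‖ ∂μ) ≤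
        ∫ g', (‖φ1 g' - u1 n g'‖ + ‖φ2 (g'⁻¹ * g) - u2 n (g'⁻¹ * g)‖) ∂μ := by
      apply integral_mono hintd (hint1.add (slice_int _ hint2 g))
      intro x
      simp only [Pi.sub_apply, Pi.add_apply]
      have a := hφ1 x; have a' := hu1m n x
      have b := hφ2 (x⁻¹ * g); have b' := hu2m n (x⁻¹ * g)
      simp only [Real.norm_eq_abs]
      have key : |u1 n x * u2 n (x⁻¹ * g) - φ1 x * φ2 (x⁻¹ * g)| ≤
          |u1 n x - φ1 x| * |u2 n (x⁻¹ * g)| + |φ1 x| * |u2 n (x⁻¹ * g) - φ2 (x⁻¹ * g)| := by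
        calc |u1 n x * u2 n (x⁻¹ * g) - φ1 x * φ2 (x⁻¹ * g)|
            = |(u1 n x - φ1 x) * u2 n (x⁻¹ * g) + φ1 x * (u2 n (x⁻¹ * g) - φ2 (x⁻¹ * g))| := by
              ring_nf
          _ ≤ |(u1 n x - φ1 x) * u2 n (x⁻¹ * g)| + |φ1 x * (u2 n (x⁻¹ * g) - φ2 (x⁻¹ * g))| :=
              abs_add_le _ _
          _ = |u1 n x - φ1 x| * |u2 n (x⁻¹ * g)| + |φ1 x| * |u2 n (x⁻¹ * g) - φ2 (x⁻¹ * g)| := by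
              rw [abs_mul, abs_mul]
      have h2 : |u2 n (x⁻¹ * g)| ≤ 1 := abs_le.2 ⟨by linarith [b'.1], b'.2⟩
      have h3 : |φ1 x| ≤ 1 := abs_le.2 ⟨by linarith [a.1], a.2⟩
      have h4 : |u1 n x - φ1 x| = |φ1 x - u1 n x| := abs_sub_comm _ _
      have h5 : |u2 n (x⁻¹ * g) - φ2 (x⁻¹ * g)| = |φ2 (x⁻¹ * g) - u2 n (x⁻¹ * g)| :=
        abs_sub_comm _ _
      nlinarith [abs_nonneg (u1 n x - φ1 x), abs_nonneg (u2 n (x⁻¹ * g) - φ2 (x⁻¹ * g)),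
        abs_nonneg (φ1 x), abs_nonneg (u2 n (x⁻¹ * g))]
    have hsum : (∫ g', (‖φ1 g' - u1 n g'‖ + ‖φ2 (g'⁻¹ * g) - u2 n (g'⁻¹ * g)‖) ∂μ)
        ≤ 1/(n+1) + 1/(n+1) := by
      rw [integral_add hint1 (slice_int _ hint2 g)]
      have e2 : (∫ g', ‖φ2 (g'⁻¹ * g) - u2 n (g'⁻¹ * g)‖ ∂μ) = ∫ x, ‖φ2 x - u2 n x‖ ∂μ :=
        slice_eq _ hint2 g
      rw [e2]
      exact add_le_add (hu1 n) (hu2 n)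
    exact habs.trans (hbound.trans hsum)
  -- limit of sequences
  have εlim : Tendsto (fun n : ℕ => 1/((n:ℝ)+1) + 1/((n:ℝ)+1)) atTop (nhds 0) := by
    have := tendsto_one_div_add_atTop_nhds_zero_nat (𝕜 := ℝ)
    simpa using this.add this
  have tendpt : ∀ g : G, Tendsto (fun n => cvn n g) atTop (nhds (cv g)) := by
    intro g
    rw [← tendsto_sub_nhds_zero_iff]
    exact squeeze_zero_norm (fun n => est n g) εlim
  have cvSM : StronglyMeasurable cv := by
    apply stronglyMeasurable_of_tendsto atTop (fun n => (cvn_cont n).stronglyMeasurable)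
    rw [tendsto_pi_nhds]
    exact tendpt
  have cv_nonneg : ∀ g, 0 ≤ cv g := fun g => le_trans ht0 (lower g)
  have cv_le : ∀ g, cv g ≤ I1 := by
    intro g
    apply integral_mono (prodint g) hi1
    intro x
    have a := hφ1 x; have b := hφ2 (x⁻¹ * g)
    simp only
    nlinarith [a.1, a.2, b.1, b.2]
  have cvInt : Integrable cv μ := by
    apply Integrable.mono' (integrable_const I1) cvSM.aestronglyMeasurable
    filter_upwards with g
    rw [Real.norm_eq_abs, abs_of_nonneg (cv_nonneg g)]
    exact cv_le g
  -- integrals converge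
  have tendInt : Tendsto (fun n => ∫ g, cvn n g ∂μ) atTop (nhds (∫ g, cv g ∂μ)) := by
    rw [← tendsto_sub_nhds_zero_iff]
    apply squeeze_zero_norm (a := fun n : ℕ => (1/((n:ℝ)+1) + 1/((n:ℝ)+1)) * V)
    · intro n
      have cvnInt : Integrable (cvn n) μ :=
        (cvn_cont n).integrable_of_hasCompactSupport (HasCompactSupport.of_compactSpace _)
      have : (∫ g, cvn n g ∂μ) - ∫ g, cv g ∂μ = ∫ g, (cvn n g - cv g) ∂μ :=
        (integral_sub cvnInt cvInt).symm
      rw [Real.norm_eq_abs, this]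
      calc |∫ g, (cvn n g - cv g) ∂μ| ≤ ∫ g, ‖cvn n g - cv g‖ ∂μ := by
            simpa [Real.norm_eq_abs] using
              norm_integral_le_integral_norm (f := fun g => cvn n g - cv g) (μ := μ)
        _ ≤ ∫ _g, (1/((n:ℝ)+1) + 1/((n:ℝ)+1)) ∂μ := by
            apply integral_mono (cvnInt.sub cvInt).norm (integrable_const _)
            intro g
            simpa [Real.norm_eq_abs] using est n g
        _ = (1/((n:ℝ)+1) + 1/((n:ℝ)+1)) * V := by
            rw [integral_const, smul_eq_mul, mul_comm, measureReal_def]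
    · simpa using εlim.mul_const V
  have tendI1 : Tendsto (fun n => ∫ x, u1 n x ∂μ) atTop (nhds I1) := by
    rw [← tendsto_sub_nhds_zero_iff]
    apply squeeze_zero_norm (a := fun n : ℕ => 1/((n:ℝ)+1))
    · intro n
      have : (∫ x, u1 n x ∂μ) - I1 = ∫ x, (u1 n x - φ1 x) ∂μ :=
        (integral_sub (u1int n) hi1).symm
      rw [Real.norm_eq_abs, this]
      calc |∫ x, (u1 n x - φ1 x) ∂μ| ≤ ∫ x, ‖u1 n x - φ1 x‖ ∂μ := by
            simpa [Real.norm_eq_abs] using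
              norm_integral_le_integral_norm (f := fun x => u1 n x - φ1 x) (μ := μ)
        _ = ∫ x, ‖φ1 x - u1 n x‖ ∂μ := by
            congr 1 with x
            exact norm_sub_rev _ _
        _ ≤ 1/((n:ℝ)+1) := hu1 n
    · exact tendsto_one_div_add_atTop_nhds_zero_nat
  have tendI2 : Tendsto (fun n => ∫ x, u2 n x ∂μ) atTop (nhds I2) := by
    rw [← tendsto_sub_nhds_zero_iff]
    apply squeeze_zero_norm (a := fun n : ℕ => 1/((n:ℝ)+1))
    · intro n
      have : (∫ x, u2 n x ∂μ) - I2 = ∫ x, (u2 n x - φ2 x) ∂μ :=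
        (integral_sub (u2int n) hi2).symm
      rw [Real.norm_eq_abs, this]
      calc |∫ x, (u2 n x - φ2 x) ∂μ| ≤ ∫ x, ‖u2 n x - φ2 x‖ ∂μ := by
            simpa [Real.norm_eq_abs] using
              norm_integral_le_integral_norm (f := fun x => u2 n x - φ2 x) (μ := μ)
        _ = ∫ x, ‖φ2 x - u2 n x‖ ∂μ := by
            congr 1 with x
            exact norm_sub_rev _ _
        _ ≤ 1/((n:ℝ)+1) := hu2 n
    · exact tendsto_one_div_add_atTop_nhds_zero_nat
  have prodlim : Tendsto (fun n => ∫ g, cvn n g ∂μ) atTop (nhds (I1 * I2)) := by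
    have heq : (fun n => ∫ g, cvn n g ∂μ)
        = fun n => (∫ x, u1 n x ∂μ) * ∫ x, u2 n x ∂μ := by
      funext n
      exact my_swap_aux μ (u1 n) (u2 n) (hu1c n) (hu2c n)
    rw [heq]
    exact tendI1.mul tendI2
  have key : (∫ g, cv g ∂μ) = I1 * I2 := tendsto_nhds_unique tendInt prodlim
  -- conclusion
  calc (∫ g, max (cv g - t) 0 ∂μ) = ∫ g, (cv g - t) ∂μ := by
        congr 1 with g
        exact max_eq_left (by linarith [lower g])
    _ = (∫ g, cv g ∂μ) - ∫ _g, t ∂μ := integral_sub cvInt (integrable_const t)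
    _ = I1 * I2 - t * V := by
        rw [key, integral_const, smul_eq_mul, measureReal_def, ← hVdef]
        ring
end

section
/- Let G be a connected unimodular locally compact group with Haar measure dg, and let φ1, φ2 : G → [0,1] be integrable functions with ‖φ1‖ + ‖φ2‖ > vol(G). Then for every real t with 0 < t < ‖φ1‖ + ‖φ2‖ − vol(G) one has ∫_G max(φ1*φ2(g) − t, 0) dg > (‖φ1‖ − t)(‖φ2‖ − t); in particular, the inequality ∫_G max(φ1*φ2 − t, 0) ≤ (‖φ1‖ − t)(‖φ2‖ − t) fails when the hypothesis ‖φ1‖ + ‖φ2‖ ≤ m(G) is violated. -/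
open MeasureTheory
open scoped NNReal ENNReal

private lemma aux_compactSpace
    {G : Type*} [Group G] [TopologicalSpace G] [IsTopologicalGroup G]
    [LocallyCompactSpace G] [MeasurableSpace G] [BorelSpace G]
    (μ : Measure G) [μ.IsHaarMeasure] [IsFiniteMeasure μ] : CompactSpace G := by
  by_contra H
  rw [not_compactSpace_iff] at H
  exact (measure_ne_top μ Set.univ) (measure_univ_of_isMulLeftInvariant μ)

private lemma aux_invInvariant
    {G : Type*} [Group G] [TopologicalSpace G] [IsTopologicalGroup G]
    [LocallyCompactSpace G] [MeasurableSpace G] [BorelSpace G] [Nonempty G]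
    (μ : Measure G) [μ.IsHaarMeasure] [μ.IsMulRightInvariant] [IsFiniteMeasure μ] :
    μ.IsInvInvariant := by
  have hcs : CompactSpace G := aux_compactSpace μ
  have h1 : μ.inv = Measure.haarScalarFactor μ.inv μ • μ :=
    Measure.isMulInvariant_eq_smul_of_compactSpace μ.inv μ
  have huniv : μ.inv Set.univ = μ Set.univ := by
    rw [Measure.inv_apply, Set.inv_univ]
  have hm0 : μ Set.univ ≠ 0 := (isOpen_univ.measure_pos μ Set.univ_nonempty).ne'
  have hc : Measure.haarScalarFactor μ.inv μ = 1 := by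
    have h2 := huniv
    rw [h1] at h2
    simp only [Measure.smul_apply, smul_eq_mul, ENNReal.smul_def] at h2
    have h3 : (Measure.haarScalarFactor μ.inv μ : ENNReal) * μ Set.univ = 1 * μ Set.univ := by
      rw [one_mul]; exact h2
    exact ENNReal.coe_eq_one.1 ((ENNReal.mul_left_inj hm0 (measure_ne_top μ Set.univ)).1 h3)
  constructor
  rw [h1, hc, one_smul]

/-- **Necessity of the assumption (Section 3).** Let `G` be a connected unimodular locally
compact group and `φ1 φ2 : G → [0,1]` integrable with `‖φ1‖ + ‖φ2‖ > vol G`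
(in particular `vol G < ∞`). Then for every `0 < t < ‖φ1‖ + ‖φ2‖ - vol G` one has
`∫ max (φ1 * φ2 - t) 0 > (‖φ1‖ - t)(‖φ2‖ - t)`; that is, the inequality of
Lemma 1.2 fails when `‖φ1‖ + ‖φ2‖ ≤ m(G)` is violated. -/
theorem ft_convolution_counterexample
    {G : Type*} [Group G] [TopologicalSpace G] [IsTopologicalGroup G]
    [LocallyCompactSpace G] [MeasurableSpace G] [BorelSpace G]
    [ConnectedSpace G]
    (μ : Measure G) [μ.IsHaarMeasure] [μ.IsMulRightInvariant]
    (φ1 φ2 : G → ℝ)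
    (hφ1 : ∀ g, φ1 g ∈ Set.Icc (0 : ℝ) 1) (hφ2 : ∀ g, φ2 g ∈ Set.Icc (0 : ℝ) 1)
    (hi1 : Integrable φ1 μ) (hi2 : Integrable φ2 μ)
    (hvol : μ Set.univ < ENNReal.ofReal ((∫ g, φ1 g ∂μ) + ∫ g, φ2 g ∂μ))
    (t : ℝ) (ht0 : 0 < t)
    (ht : t < (∫ g, φ1 g ∂μ) + (∫ g, φ2 g ∂μ) - (μ Set.univ).toReal) :
    ((∫ g, φ1 g ∂μ) - t) * ((∫ g, φ2 g ∂μ) - t) <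
      ∫ g, max ((∫ g', φ1 g' * φ2 (g'⁻¹ * g) ∂μ) - t) 0 ∂μ := by
  haveI : IsFiniteMeasure μ := ⟨hvol.trans ENNReal.ofReal_lt_top⟩
  haveI : μ.IsInvInvariant := aux_invInvariant μ
  haveI : CompactSpace G := aux_compactSpace μ
  set I1 : ℝ := ∫ g, φ1 g ∂μ with hI1
  set I2 : ℝ := ∫ g, φ2 g ∂μ with hI2
  set m : ℝ := (μ Set.univ).toReal with hm
  have hm0 : 0 ≤ m := ENNReal.toReal_nonneg
  have hI1nn : 0 ≤ I1 := integral_nonneg fun g => (hφ1 g).1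
  have hI2nn : 0 ≤ I2 := integral_nonneg fun g => (hφ2 g).1
  set c : G → ℝ := fun x => ∫ y, φ1 y * φ2 (y⁻¹ * x) ∂μ with hc
  -- translation machinery
  have hT : ∀ x : G, MeasurePreserving (fun y : G => y⁻¹ * x) μ μ := fun x =>
    (measurePreserving_mul_right μ x).comp (Measure.measurePreserving_inv μ)
  have hTemb : ∀ x : G, MeasurableEmbedding (fun y : G => y⁻¹ * x) := fun x =>
    ((MeasurableEquiv.inv G).trans (MeasurableEquiv.mulRight x)).measurableEmbedding
  have hcomp_int : ∀ (ψ : G → ℝ), Integrable ψ μ → ∀ x : G,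
      Integrable (fun y => ψ (y⁻¹ * x)) μ := fun ψ hψ x =>
    ((hT x).integrable_comp_emb (hTemb x)).2 hψ
  have hcomp_eq : ∀ (ψ : G → ℝ) (x : G), ∫ y, ψ (y⁻¹ * x) ∂μ = ∫ y, ψ y ∂μ := fun ψ x =>
    (hT x).integral_comp (hTemb x) ψ
  have hφ1bdd : ∃ C, ∀ y : G, ‖φ1 y‖ ≤ C :=
    ⟨1, fun y => by rw [Real.norm_eq_abs, abs_of_nonneg (hφ1 y).1]; exact (hφ1 y).2⟩
  have hslice : ∀ x : G, Integrable (fun y => φ1 y * φ2 (y⁻¹ * x)) μ := fun x =>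
    (hcomp_int φ2 hi2 x).bdd_mul hi1.aestronglyMeasurable (Filter.Eventually.of_forall hφ1bdd.choose_spec)
  -- pointwise bounds on c
  have hclb : ∀ x : G, I1 + I2 - m ≤ c x := by
    intro x
    have hsub := hcomp_int φ2 hi2 x
    have h2 : ∫ y, φ2 (y⁻¹ * x) ∂μ = I2 := hcomp_eq φ2 x
    have hadd : Integrable (fun y => φ1 y + φ2 (y⁻¹ * x)) μ := hi1.add hsub
    have hsum : Integrable (fun y => φ1 y + φ2 (y⁻¹ * x) - 1) μ :=
      hadd.sub (integrable_const 1)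
    have hkey : ∫ y, (φ1 y + φ2 (y⁻¹ * x) - 1) ∂μ = I1 + I2 - m := by
      rw [integral_sub hadd (integrable_const 1), integral_add hi1 hsub,
        integral_const, measureReal_def, h2, smul_eq_mul, mul_one]
    rw [← hkey]
    refine integral_mono hsum (hslice x) fun y => ?_
    have h1 := hφ1 y
    have h2' := hφ2 (y⁻¹ * x)
    simp only [Set.mem_Icc] at h1 h2'
    nlinarith [mul_nonneg (sub_nonneg.2 h1.2) (sub_nonneg.2 h2'.2)]
  have hcub : ∀ x : G, c x ≤ I1 := by
    intro x
    refine integral_mono (hslice x) hi1 fun y => ?_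
    have h1 := hφ1 y
    have h2' := hφ2 (y⁻¹ * x)
    simp only [Set.mem_Icc] at h1 h2'
    nlinarith
  have hcnn : ∀ x : G, 0 ≤ c x := fun x =>
    integral_nonneg fun y => mul_nonneg (hφ1 y).1 (hφ2 _).1
  -- the measure with density φ1
  set ν : Measure G := μ.withDensity (fun y => ENNReal.ofReal (φ1 y)) with hν
  haveI : IsFiniteMeasure ν := isFiniteMeasure_withDensity_ofReal hi1.2
  have hν_univ : (ν Set.univ).toReal = I1 := by
    rw [hν, withDensity_apply _ MeasurableSet.univ, Measure.restrict_univ,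
      ← ofReal_integral_eq_lintegral_ofReal hi1 (Filter.Eventually.of_forall fun g => (hφ1 g).1),
      ENNReal.toReal_ofReal hI1nn]
  have hν_int : ∀ ψ : G → ℝ, ∫ y, ψ y ∂ν = ∫ y, φ1 y * ψ y ∂μ := by
    intro ψ
    have hmeas : AEMeasurable (fun y => Real.toNNReal (φ1 y)) μ :=
      measurable_real_toNNReal.comp_aemeasurable hi1.aemeasurable
    have h := integral_withDensity_eq_integral_smul₀ hmeas ψ
    have h2 : (fun y => ((Real.toNNReal (φ1 y) : ℝ≥0) : ℝ≥0∞))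
        = fun y => ENNReal.ofReal (φ1 y) := rfl
    rw [h2, ← hν] at h
    rw [h]
    congr 1 with y
    simp [NNReal.smul_def, Real.coe_toNNReal _ (hφ1 y).1]
  -- key: continuity and total integral for continuous approximations
  have key : ∀ f : G → ℝ, Continuous f →
      Continuous (fun x => ∫ y, φ1 y * f (y⁻¹ * x) ∂μ) ∧
      (∫ x, (∫ y, φ1 y * f (y⁻¹ * x) ∂μ) ∂μ) = I1 * ∫ y, f y ∂μ := by
    intro f hf
    have hfcs : HasCompactSupport f := (isClosed_tsupport f).isCompact
    have heq : ∀ x : G, ∫ y, f (y⁻¹ * x) ∂ν = ∫ y, φ1 y * f (y⁻¹ * x) ∂μ := fun x =>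
      hν_int (fun y => f (y⁻¹ * x))
    constructor
    · have hcont := continuous_integral_apply_inv_mul (μ := ν) hf hfcs
      simp only [heq] at hcont
      exact hcont
    · have hswap :
          ∫ x, (∫ y, f (y⁻¹ * x) ∂ν) ∂μ = ∫ y, (∫ x, f (y⁻¹ * x) ∂μ) ∂ν := by
        apply integral_integral_swap_of_hasCompactSupport
        · exact hf.comp (continuous_snd.inv.mul continuous_fst)
        · exact (isClosed_tsupport _).isCompact
      calc ∫ x, (∫ y, φ1 y * f (y⁻¹ * x) ∂μ) ∂μ
          = ∫ x, (∫ y, f (y⁻¹ * x) ∂ν) ∂μ := by simp only [heq]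
        _ = ∫ y, (∫ x, f (y⁻¹ * x) ∂μ) ∂ν := hswap
        _ = ∫ _y, (∫ x, f x ∂μ) ∂ν := by
            congr 1 with y
            exact integral_mul_left_eq_self f y⁻¹
        _ = (ν Set.univ).toReal * ∫ x, f x ∂μ := by rw [integral_const, measureReal_def, smul_eq_mul]
        _ = I1 * ∫ y, f y ∂μ := by rw [hν_univ]
  -- approximation bound
  have approx : ∀ f : G → ℝ, Continuous f → ∀ x : G,
      |c x - ∫ y, φ1 y * f (y⁻¹ * x) ∂μ| ≤ ∫ y, ‖φ2 y - f y‖ ∂μ := by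
    intro f hf x
    have hfint : Integrable f μ :=
      hf.integrable_of_hasCompactSupport (isClosed_tsupport f).isCompact
    have h1 : Integrable (fun y => φ1 y * f (y⁻¹ * x)) μ :=
      (hcomp_int f hfint x).bdd_mul hi1.aestronglyMeasurable (Filter.Eventually.of_forall hφ1bdd.choose_spec)
    have h2 := hslice x
    rw [hc]
    rw [← integral_sub h2 h1]
    have hdi : Integrable (fun y => ‖(fun z => φ2 z - f z) (y⁻¹ * x)‖) μ :=
      (hcomp_int (fun z => φ2 z - f z) (hi2.sub hfint) x).norm
    calc |∫ y, (φ1 y * φ2 (y⁻¹ * x) - φ1 y * f (y⁻¹ * x)) ∂μ|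
        ≤ ∫ y, ‖φ1 y * φ2 (y⁻¹ * x) - φ1 y * f (y⁻¹ * x)‖ ∂μ := by
          rw [← Real.norm_eq_abs]; exact norm_integral_le_integral_norm _
      _ ≤ ∫ y, ‖(fun z => φ2 z - f z) (y⁻¹ * x)‖ ∂μ := by
          refine integral_mono (h2.sub h1).norm hdi fun y => ?_
          simp only [Real.norm_eq_abs, ← mul_sub, abs_mul]
          have h3 := hφ1 y
          simp only [Set.mem_Icc] at h3
          nlinarith [abs_nonneg (φ2 (y⁻¹ * x) - f (y⁻¹ * x)), abs_of_nonneg h3.1]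
      _ = ∫ y, ‖φ2 y - f y‖ ∂μ := hcomp_eq (fun z => ‖φ2 z - f z‖) x
  -- continuity of c
  have hc_cont : Continuous c := by
    choose fs _fscs fsclose fscont _fsint using fun n : ℕ =>
      hi2.exists_hasCompactSupport_integral_sub_le
        (show (0:ℝ) < 1/(n+1) by positivity)
    refine TendstoUniformly.continuous (F := fun n x => ∫ y, φ1 y * fs n (y⁻¹ * x) ∂μ)
      (p := (Filter.atTop : Filter ℕ))
      ?_ (Filter.Eventually.of_forall fun n => (key (fs n) (fscont n)).1).frequently
    rw [Metric.tendstoUniformly_iff]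
    intro ε hε
    obtain ⟨N, hN⟩ : ∃ N : ℕ, (1:ℝ)/(N+1) < ε := exists_nat_one_div_lt hε
    filter_upwards [Filter.eventually_ge_atTop N] with n hn x
    have h1 : |c x - ∫ y, φ1 y * fs n (y⁻¹ * x) ∂μ| ≤ 1/(n+1) :=
      (approx (fs n) (fscont n) x).trans (fsclose n)
    have h2 : (1:ℝ)/(n+1) ≤ 1/(N+1) := by
      apply one_div_le_one_div_of_le (by positivity)
      have : (N:ℝ) ≤ n := Nat.cast_le.2 hn
      linarith
    rw [Real.dist_eq]
    linarith [h1, h2, hN]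
  have hcint : Integrable c μ := by
    refine Integrable.mono' (integrable_const I1) hc_cont.aestronglyMeasurable ?_
    refine Filter.Eventually.of_forall fun x => ?_
    rw [Real.norm_eq_abs, abs_of_nonneg (hcnn x)]
    exact hcub x
  -- total integral of c
  have hctot : ∫ x, c x ∂μ = I1 * I2 := by
    have hbound : ∀ ε : ℝ, 0 < ε → |(∫ x, c x ∂μ) - I1 * I2| ≤ ε * (m + I1) := by
      intro ε hε
      obtain ⟨f, _fcs, hfclose, hfcont, hfint⟩ :=
        hi2.exists_hasCompactSupport_integral_sub_le hε
      have hFcont := (key f hfcont).1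
      have hFtot := (key f hfcont).2
      have hFint : Integrable (fun x => ∫ y, φ1 y * f (y⁻¹ * x) ∂μ) μ :=
        hFcont.integrable_of_hasCompactSupport (isClosed_tsupport _).isCompact
      have h1 : |(∫ x, c x ∂μ) - ∫ x, (∫ y, φ1 y * f (y⁻¹ * x) ∂μ) ∂μ| ≤ ε * m := by
        rw [← integral_sub hcint hFint]
        calc |∫ x, (c x - ∫ y, φ1 y * f (y⁻¹ * x) ∂μ) ∂μ|
            ≤ ∫ x, ‖c x - ∫ y, φ1 y * f (y⁻¹ * x) ∂μ‖ ∂μ := by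
              rw [← Real.norm_eq_abs]; exact norm_integral_le_integral_norm _
          _ ≤ ∫ _x, ε ∂μ := by
              refine integral_mono (hcint.sub hFint).norm (integrable_const ε) fun x => ?_
              exact (approx f hfcont x).trans hfclose
          _ = m * ε := by rw [integral_const, measureReal_def, smul_eq_mul]
          _ = ε * m := mul_comm _ _
      have h2 : |I1 * (∫ y, f y ∂μ) - I1 * I2| ≤ ε * I1 := by
        rw [← mul_sub, abs_mul, abs_of_nonneg hI1nn]
        have h3 : |(∫ y, f y ∂μ) - I2| ≤ ε := by
          rw [← integral_sub hfint hi2]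
          calc |∫ y, (f y - φ2 y) ∂μ| ≤ ∫ y, ‖f y - φ2 y‖ ∂μ := by
                rw [← Real.norm_eq_abs]; exact norm_integral_le_integral_norm _
            _ = ∫ y, ‖φ2 y - f y‖ ∂μ := by simp only [norm_sub_rev]
            _ ≤ ε := hfclose
        calc I1 * |(∫ y, f y ∂μ) - I2| ≤ I1 * ε := by nlinarith
          _ = ε * I1 := mul_comm _ _
      have h2' : |(∫ x, (∫ y, φ1 y * f (y⁻¹ * x) ∂μ) ∂μ) - I1 * I2| ≤ ε * I1 := by
        rw [hFtot]; exact h2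
      calc |(∫ x, c x ∂μ) - I1 * I2|
          ≤ |(∫ x, c x ∂μ) - ∫ x, (∫ y, φ1 y * f (y⁻¹ * x) ∂μ) ∂μ|
            + |(∫ x, (∫ y, φ1 y * f (y⁻¹ * x) ∂μ) ∂μ) - I1 * I2| := abs_sub_le _ _ _
        _ ≤ ε * m + ε * I1 := add_le_add h1 h2'
        _ = ε * (m + I1) := by ring
    have habs : |(∫ x, c x ∂μ) - I1 * I2| ≤ 0 := by
      refine le_of_forall_pos_le_add fun δ hδ => ?_
      have hd : 0 < δ / (m + I1 + 1) := by positivity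
      have hb := hbound _ hd
      have h4 : δ / (m + I1 + 1) * (m + I1) ≤ δ := by
        rw [div_mul_eq_mul_div, div_le_iff₀ (by positivity)]
        nlinarith
      linarith
    have hnn := abs_nonneg ((∫ x, c x ∂μ) - I1 * I2)
    have h5 : |(∫ x, c x ∂μ) - I1 * I2| = 0 := le_antisymm habs hnn
    have h6 := abs_eq_zero.1 h5
    linarith [sub_eq_zero.1 h6]
  -- conclusion
  have hmax : ∀ x : G, max (c x - t) 0 = c x - t := fun x =>
    max_eq_left (by have := hclb x; linarith)
  have hgoal : ∫ g, max (c g - t) 0 ∂μ = I1 * I2 - m * t := by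
    rw [integral_congr_ae (Filter.Eventually.of_forall hmax),
      integral_sub hcint (integrable_const t), hctot, integral_const, measureReal_def, smul_eq_mul]
  rw [hgoal]
  nlinarith [mul_pos ht0 (show (0:ℝ) < I1 + I2 - m - t by linarith)]
end

section
/- Let f : [0,1] → ℝ be a convex function with f(0) = 0 and let n ≥ 1 be an integer. Define f_(n) : [0,1] → ℝ by f_(n)(y) := n·( f(1/n)·y + 2·Σ_{k=1}^{n−1} ĥ_k · max(y − k/n, 0) ), where ĥ_k := (f((k−1)/n) + f((k+1)/n))/2 − f(k/n). Then for every 0 < y < 1 one has f_(n)(y) ≤ f(y) + f̂_0^1(y)/(4·n·y·(1−y)), where f̂_0^1(y) := (1−y)·f(0) + y·f(1) − f(y) = y·f(1) − f(y). -/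
lemma key_ident (f : ℝ → ℝ) (n : ℕ) (hf0 : f 0 = 0) (y : ℝ) :
    ∀ k : ℕ, f (1 / (n:ℝ)) * y + 2 * ∑ j ∈ Finset.Ico 1 (k+1),
      ((f (((j:ℝ) - 1) / n) + f (((j:ℝ) + 1) / n)) / 2 - f ((j:ℝ) / n)) * (y - (j:ℝ)/n)
    = (((k:ℝ)+1)/n - y) * f ((k:ℝ)/n) + (y - (k:ℝ)/n) * f (((k:ℝ)+1)/n) := by
  intro k
  induction k with
  | zero => norm_num [hf0]; ring
  | succ k ih =>
      rw [show k + 1 + 1 = (k+1) + 1 from rfl, Finset.sum_Ico_succ_top (by omega)]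
      push_cast
      rw [show ((k:ℝ) + 1 - 1) = (k:ℝ) from by ring]
      push_cast at ih
      linear_combination ih

/-- **Lemma 6.1 (2).** Let `f : [0,1] → ℝ` be convex with `f 0 = 0` and `n ≥ 1`. Define
`f_(n)(y) := n (f(1/n) y + 2 ∑_{k=1}^{n-1} ĥ_k max (y - k/n) 0)` with
`ĥ_k := (f((k-1)/n) + f((k+1)/n))/2 - f(k/n)`. Then for every `0 < y < 1`,
`f_(n)(y) ≤ f(y) + f̂_0^1(y) / (4 n y (1 - y))` where `f̂_0^1(y) = y f(1) - f(y)`. -/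
theorem fn_close_to_f
    (f : ℝ → ℝ) (hf : ConvexOn ℝ (Set.Icc (0 : ℝ) 1) f) (hf0 : f 0 = 0)
    (n : ℕ) (hn : 1 ≤ n)
    (fn : ℝ → ℝ)
    (hfn : ∀ y : ℝ, fn y = (n : ℝ) * (f (1 / (n : ℝ)) * y +
      2 * ∑ k ∈ Finset.Ico 1 n,
        ((f (((k : ℝ) - 1) / n) + f (((k : ℝ) + 1) / n)) / 2 - f ((k : ℝ) / n)) *
          max (y - (k : ℝ) / n) 0)) :
    ∀ y : ℝ, 0 < y → y < 1 →
      fn y ≤ f y + (y * f 1 - f y) / (4 * n * y * (1 - y)) := by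
  intro y hy0 hy1
  have hn0 : (0:ℝ) < n := by exact_mod_cast Nat.pos_of_ne_zero (by omega)
  set k := ⌊(n:ℝ)*y⌋₊ with hkdef
  have hk1 : (k:ℝ) ≤ (n:ℝ)*y := Nat.floor_le (by positivity)
  have hk2 : (n:ℝ)*y < (k:ℝ)+1 := Nat.lt_floor_add_one _
  have hkn : k + 1 ≤ n := by
    have h1 : (k:ℝ) < (n:ℝ) := lt_of_le_of_lt hk1 (by nlinarith)
    have := Nat.cast_lt (α := ℝ) |>.mp h1
    omega
  have hkn' : (k:ℝ) + 1 ≤ (n:ℝ) := by exact_mod_cast hkn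
  have hay : (k:ℝ)/n ≤ y := by rw [div_le_iff₀ hn0]; linarith [hk1]
  have hyb : y < ((k:ℝ)+1)/n := by rw [lt_div_iff₀ hn0]; linarith [hk2]
  have hb1 : ((k:ℝ)+1)/n ≤ 1 := by rw [div_le_one hn0]; exact hkn'
  have ha0 : (0:ℝ) ≤ (k:ℝ)/n := by positivity
  -- compute fn y : piecewise linear interpolation
  have hsplit : fn y = (n:ℝ) * ((((k:ℝ)+1)/n - y) * f ((k:ℝ)/n) + (y - (k:ℝ)/n) * f (((k:ℝ)+1)/n)) := by
    rw [hfn]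
    rw [← Finset.sum_Ico_consecutive _ (show 1 ≤ k+1 by omega) hkn]
    have h2 : ∑ j ∈ Finset.Ico (k+1) n,
        ((f (((j:ℝ) - 1) / n) + f (((j:ℝ) + 1) / n)) / 2 - f ((j:ℝ) / n)) *
          max (y - (j:ℝ) / n) 0 = 0 := by
      apply Finset.sum_eq_zero
      intro j hj
      obtain ⟨hj1, hj2⟩ := Finset.mem_Ico.mp hj
      have hjk : (k:ℝ)+1 ≤ (j:ℝ) := by exact_mod_cast hj1
      have hyj : y ≤ (j:ℝ)/n := le_trans (le_of_lt hyb) (by gcongr)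
      rw [max_eq_right (by linarith)]
      ring
    have h1 : ∑ j ∈ Finset.Ico 1 (k+1),
        ((f (((j:ℝ) - 1) / n) + f (((j:ℝ) + 1) / n)) / 2 - f ((j:ℝ) / n)) *
          max (y - (j:ℝ) / n) 0
        = ∑ j ∈ Finset.Ico 1 (k+1),
        ((f (((j:ℝ) - 1) / n) + f (((j:ℝ) + 1) / n)) / 2 - f ((j:ℝ) / n)) *
          (y - (j:ℝ) / n) := by
      apply Finset.sum_congr rfl
      intro j hj
      obtain ⟨hj1, hj2⟩ := Finset.mem_Ico.mp hj
      have hjk : (j:ℝ) ≤ (k:ℝ) := by exact_mod_cast Nat.lt_succ_iff.mp hj2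
      have : (j:ℝ)/n ≤ y := le_trans (by gcongr) hay
      rw [max_eq_left (by linarith)]
    rw [h2, h1, add_zero, key_ident f n hf0 y k]
  -- convexity bounds
  have hmem0 : (0:ℝ) ∈ Set.Icc (0:ℝ) 1 := by norm_num
  have hmem1 : (1:ℝ) ∈ Set.Icc (0:ℝ) 1 := by norm_num
  have hmemy : y ∈ Set.Icc (0:ℝ) 1 := ⟨le_of_lt hy0, le_of_lt hy1⟩
  have hy0' : y ≠ 0 := ne_of_gt hy0
  have hy1' : (1:ℝ) - y ≠ 0 := by linarith
  have hfa : f ((k:ℝ)/n) ≤ ((k:ℝ)/n/y) * f y := by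
    have hc1 : (0:ℝ) ≤ 1 - (k:ℝ)/n/y := by
      have : (k:ℝ)/n/y ≤ 1 := by rw [div_le_one hy0]; exact hay
      linarith
    have hc2 : (0:ℝ) ≤ (k:ℝ)/n/y := by positivity
    have := hf.2 hmem0 hmemy hc1 hc2 (by ring)
    simp only [smul_eq_mul, mul_zero, zero_add] at this
    rw [div_mul_cancel₀ _ hy0'] at this
    rw [hf0] at this
    linarith
  have hfb : f (((k:ℝ)+1)/n) ≤ ((1 - ((k:ℝ)+1)/n)/(1-y)) * f y + ((((k:ℝ)+1)/n - y)/(1-y)) * f 1 := by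
    have hc1 : (0:ℝ) ≤ (1 - ((k:ℝ)+1)/n)/(1-y) := by
      apply div_nonneg (by linarith) (by linarith)
    have hc2 : (0:ℝ) ≤ (((k:ℝ)+1)/n - y)/(1-y) := by
      apply div_nonneg (by linarith) (by linarith)
    have hsum : (1 - ((k:ℝ)+1)/n)/(1-y) + (((k:ℝ)+1)/n - y)/(1-y) = 1 := by
      field_simp
      ring
    have := hf.2 hmemy hmem1 hc1 hc2 hsum
    simp only [smul_eq_mul, mul_one] at this
    have harg : (1 - ((k:ℝ)+1)/n)/(1-y) * y + (((k:ℝ)+1)/n - y)/(1-y) = ((k:ℝ)+1)/n := by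
      field_simp
      ring
    rw [harg] at this
    exact this
  have hD : 0 ≤ y * f 1 - f y := by
    have := hf.2 hmem0 hmem1 (by linarith : (0:ℝ) ≤ 1 - y) (le_of_lt hy0) (by ring)
    simp only [smul_eq_mul, mul_zero, mul_one, zero_add] at this
    rw [hf0] at this
    linarith
  have hbnd : (n:ℝ)*(y - (k:ℝ)/n)*(((k:ℝ)+1)/n - y) ≤ 1/(4*n) := by
    rw [le_div_iff₀ (by positivity)]
    have huv : (n:ℝ)*((y - (k:ℝ)/n) + (((k:ℝ)+1)/n - y)) = 1 := by field_simp; ring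
    nlinarith [sq_nonneg ((n:ℝ)*(y - (k:ℝ)/n) - (n:ℝ)*(((k:ℝ)+1)/n - y))]
  have hDnn : 0 ≤ (y * f 1 - f y)/(y*(1-y)) := div_nonneg hD (by nlinarith)
  calc fn y = (n:ℝ) * ((((k:ℝ)+1)/n - y) * f ((k:ℝ)/n) + (y - (k:ℝ)/n) * f (((k:ℝ)+1)/n)) := hsplit
    _ ≤ (n:ℝ) * ((((k:ℝ)+1)/n - y) * (((k:ℝ)/n/y) * f y)
          + (y - (k:ℝ)/n) * (((1 - ((k:ℝ)+1)/n)/(1-y)) * f y + ((((k:ℝ)+1)/n - y)/(1-y)) * f 1)) := by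
        apply mul_le_mul_of_nonneg_left _ (le_of_lt hn0)
        apply add_le_add
        · exact mul_le_mul_of_nonneg_left hfa (by linarith)
        · exact mul_le_mul_of_nonneg_left hfb (by linarith)
    _ = f y + ((n:ℝ)*(y - (k:ℝ)/n)*(((k:ℝ)+1)/n - y)) * ((y * f 1 - f y)/(y*(1-y))) := by
        field_simp
        ring
    _ ≤ f y + (1/(4*(n:ℝ))) * ((y * f 1 - f y)/(y*(1-y))) := by
        apply add_le_add le_rfl
        exact mul_le_mul_of_nonneg_right hbnd hDnn
    _ = f y + (y * f 1 - f y) / (4 * n * y * (1 - y)) := by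
        rw [div_mul_div_comm, one_mul]
        ring_nf
end
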